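/- Let X be a vector space with a complete invariant metric d. If f : [a,b] → X is Riemann integrable (i.e., there exists x̄ ∈ X such that for every ε > 0 there is δ > 0 with d(f(Δ), x̄) < ε for all tagged partitions Δ of [a,b] with mesh |Δ| < δ, where f(Δ) = Σᵢ (tᵢ − tᵢ₋₁) f(sᵢ)), then f is bounded, i.e., there exists L > 0 with d(0, f(t)) ≤ L for all t ∈ [a,b]. -/

import Mathlib

open Set MeasureTheory

/-- A tagged partition of `[a,b]`: points `a = t 0 < t 1 < ⋯ < t n = b`
with tags `s i ∈ [t i, t (i+1)]`. -/
structure TaggedPartition (a b : ℝ) where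
  n : ℕ
  t : ℕ → ℝ
  s : ℕ → ℝ
  npos : 0 < n
  left : t 0 = a
  right : t n = b
  mono : ∀ i < n, t i < t (i + 1)
  tag_mem : ∀ i < n, s i ∈ Set.Icc (t i) (t (i + 1))

/-- The mesh of the partition is `< δ`. -/
def TaggedPartition.MeshLT {a b : ℝ} (P : TaggedPartition a b) (δ : ℝ) : Prop :=
  ∀ i < P.n, P.t (i + 1) - P.t i < δ

/-- The set of partition points of a tagged partition. -/
def TaggedPartition.points {a b : ℝ} (P : TaggedPartition a b) : Set ℝ :=
  {x | ∃ i ≤ P.n, P.t i = x}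

/-- The Riemann sum `f(Δ) = Σᵢ (tᵢ₊₁ - tᵢ) • f(sᵢ)`. -/
def riemannSum {X : Type*} [AddCommGroup X] [Module ℝ X]
    (f : ℝ → X) {a b : ℝ} (P : TaggedPartition a b) : X :=
  ∑ i ∈ Finset.range P.n, (P.t (i + 1) - P.t i) • f (P.s i)

/-- `f` has Riemann integral `x` on `[a,b]` (mesh-based definition, metric `dist`). -/
def HasRiemannIntegral {X : Type*} [MetricSpace X] [AddCommGroup X] [Module ℝ X]
    (f : ℝ → X) (a b : ℝ) (x : X) : Prop :=
  ∀ ε > 0, ∃ δ > 0, ∀ P : TaggedPartition a b, P.MeshLT δ →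
    dist (riemannSum f P) x < ε

private def splitGrid (a b h : ℝ) (M j : ℕ) (v sL sR : ℝ)
    (hh : 0 < h) (hj : j < M) (hb : a + M * h = b)
    (hv1 : a + j * h < v) (hv2 : v < a + (j + 1) * h)
    (hsL : sL ∈ Set.Icc (a + j * h) v) (hsR : sR ∈ Set.Icc v (a + (j + 1) * h)) :
    TaggedPartition a b where
  n := M + 1
  t i := if i ≤ j then a + i * h else if i = j + 1 then v else a + (i - 1 : ℕ) * h
  s i := if i < j then a + i * h else if i = j then sL else if i = j + 1 then sR
         else a + (i - 1 : ℕ) * h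
  npos := Nat.succ_pos M
  left := by simp
  right := by
    have h1 : ¬ (M + 1 ≤ j) := by omega
    have h2 : ¬ (M + 1 = j + 1) := by omega
    simp only [h1, h2, if_false]
    simpa using hb
  mono := by
    intro i hi
    rcases lt_trichotomy i j with h1 | h1 | h1
    · rw [if_pos (by omega : i ≤ j), if_pos (by omega : i + 1 ≤ j)]
      have : (i : ℝ) < (i : ℝ) + 1 := by linarith
      push_cast
      nlinarith
    · subst h1
      rw [if_pos (le_refl i), if_neg (by omega : ¬ (i + 1 ≤ i)), if_pos rfl]
      exact hv1
    · rcases Nat.lt_or_ge i (j + 1 + 1) with h2 | h2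
      · have hi1 : i = j + 1 := by omega
        subst hi1
        rw [if_neg (by omega : ¬ (j + 1 ≤ j)), if_pos rfl,
          if_neg (by omega : ¬ (j + 1 + 1 ≤ j)), if_neg (by omega : ¬ (j + 1 + 1 = j + 1))]
        have : ((j + 1 + 1 - 1 : ℕ) : ℝ) = (j : ℝ) + 1 := by push_cast [Nat.add_sub_cancel]; ring
        rw [this]
        push_cast at hv2 ⊢
        linarith
      · rw [if_neg (by omega : ¬ (i ≤ j)), if_neg (by omega : ¬ (i = j + 1)),
          if_neg (by omega : ¬ (i + 1 ≤ j)), if_neg (by omega : ¬ (i + 1 = j + 1))]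
        have : (i + 1 - 1 : ℕ) = i := by omega
        rw [this]
        have h3 : ((i - 1 : ℕ) : ℝ) < (i : ℝ) := by
          have : (i - 1 : ℕ) < i := by omega
          exact_mod_cast this
        nlinarith
  tag_mem := by
    intro i hi
    rcases lt_trichotomy i j with h1 | h1 | h1
    · rw [if_pos h1, if_pos (by omega : i ≤ j), if_pos (by omega : i + 1 ≤ j)]
      refine ⟨le_refl _, ?_⟩
      push_cast; nlinarith
    · subst h1
      rw [if_neg (lt_irrefl i), if_pos rfl, if_pos (le_refl i),
        if_neg (by omega : ¬ (i + 1 ≤ i)), if_pos rfl]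
      exact hsL
    · rcases Nat.lt_or_ge i (j + 1 + 1) with h2 | h2
      · have hi1 : i = j + 1 := by omega
        subst hi1
        rw [if_neg (by omega : ¬ (j + 1 < j)), if_neg (by omega : ¬ (j + 1 = j)), if_pos rfl,
          if_neg (by omega : ¬ (j + 1 ≤ j)), if_pos rfl,
          if_neg (by omega : ¬ (j + 1 + 1 ≤ j)), if_neg (by omega : ¬ (j + 1 + 1 = j + 1))]
        have : ((j + 1 + 1 - 1 : ℕ) : ℝ) = (j : ℝ) + 1 := by push_cast [Nat.add_sub_cancel]; ring
        rw [this]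
        exact ⟨hsR.1, by push_cast at hsR ⊢; linarith [hsR.2]⟩
      · rw [if_neg (by omega : ¬ (i < j)), if_neg (by omega : ¬ (i = j)),
          if_neg (by omega : ¬ (i = j + 1)),
          if_neg (by omega : ¬ (i ≤ j)), if_neg (by omega : ¬ (i = j + 1)),
          if_neg (by omega : ¬ (i + 1 ≤ j)), if_neg (by omega : ¬ (i + 1 = j + 1))]
        have : (i + 1 - 1 : ℕ) = i := by omega
        rw [this]
        refine ⟨le_refl _, ?_⟩
        have h3 : ((i - 1 : ℕ) : ℝ) ≤ (i : ℝ) := by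
          have : (i - 1 : ℕ) ≤ i := by omega
          exact_mod_cast this
        nlinarith [mul_le_mul_of_nonneg_right h3 hh.le]

private lemma splitGrid_mesh (a b h : ℝ) (M j : ℕ) (v sL sR : ℝ)
    (hh : 0 < h) (hj : j < M) (hb : a + M * h = b)
    (hv1 : a + j * h < v) (hv2 : v < a + (j + 1) * h)
    (hsL : sL ∈ Set.Icc (a + j * h) v) (hsR : sR ∈ Set.Icc v (a + (j + 1) * h))
    (δ : ℝ) (hhδ : h < δ) :
    (splitGrid a b h M j v sL sR hh hj hb hv1 hv2 hsL hsR).MeshLT δ := by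
  intro i hi
  show (if i + 1 ≤ j then a + (i + 1 : ℕ) * h else if i + 1 = j + 1 then v
      else a + (i + 1 - 1 : ℕ) * h) -
    (if i ≤ j then a + (i : ℕ) * h else if i = j + 1 then v else a + (i - 1 : ℕ) * h) < δ
  rcases lt_trichotomy i j with h1 | h1 | h1
  · rw [if_pos (by omega : i + 1 ≤ j), if_pos (by omega : i ≤ j)]
    push_cast; nlinarith
  · subst h1
    rw [if_neg (by omega : ¬ (i + 1 ≤ i)), if_pos rfl, if_pos (le_refl i)]
    push_cast at hv2 ⊢
    linarith
  · rcases Nat.lt_or_ge i (j + 1 + 1) with h2 | h2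
    · have hi1 : i = j + 1 := by omega
      subst hi1
      rw [if_neg (by omega : ¬ (j + 1 + 1 ≤ j)), if_neg (by omega : ¬ (j + 1 + 1 = j + 1)),
        if_neg (by omega : ¬ (j + 1 ≤ j)), if_pos rfl]
      have : ((j + 1 + 1 - 1 : ℕ) : ℝ) = (j : ℝ) + 1 := by push_cast; ring
      rw [this]
      push_cast at hv1 ⊢
      linarith
    · rw [if_neg (by omega : ¬ (i + 1 ≤ j)), if_neg (by omega : ¬ (i + 1 = j + 1)),
        if_neg (by omega : ¬ (i ≤ j)), if_neg (by omega : ¬ (i = j + 1))]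
      have e1 : (i + 1 - 1 : ℕ) = i := by omega
      rw [e1]
      have h3 : ((i : ℕ) : ℝ) - ((i - 1 : ℕ) : ℝ) = 1 := by
        have : i - 1 + 1 = i := by omega
        have := congrArg (fun k : ℕ => (k : ℝ)) this
        push_cast at this
        linarith
      nlinarith

private lemma splitGrid_sum_sub {X : Type*} [AddCommGroup X] [Module ℝ X]
    (f : ℝ → X) (a b h : ℝ) (M j : ℕ) (v v' sL sR : ℝ)
    (hh : 0 < h) (hj : j < M) (hb : a + M * h = b)
    (hv1 : a + j * h < v) (hv2 : v < a + (j + 1) * h)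
    (hsL : sL ∈ Set.Icc (a + j * h) v) (hsR : sR ∈ Set.Icc v (a + (j + 1) * h))
    (hv1' : a + j * h < v') (hv2' : v' < a + (j + 1) * h)
    (hsL' : sL ∈ Set.Icc (a + j * h) v') (hsR' : sR ∈ Set.Icc v' (a + (j + 1) * h)) :
    riemannSum f (splitGrid a b h M j v sL sR hh hj hb hv1 hv2 hsL hsR) -
      riemannSum f (splitGrid a b h M j v' sL sR hh hj hb hv1' hv2' hsL' hsR') =
      (v - v') • (f sL - f sR) := by
  unfold riemannSum splitGrid
  dsimp only
  rw [← Finset.sum_sub_distrib]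
  have hsubset : ({j, j + 1} : Finset ℕ) ⊆ Finset.range (M + 1) := by
    intro x hx
    simp only [Finset.mem_insert, Finset.mem_singleton] at hx
    rcases hx with rfl | rfl <;> simp <;> omega
  rw [← Finset.sum_subset hsubset]
  · rw [Finset.sum_pair (by omega : j ≠ j + 1)]
    simp only [if_pos (le_refl j), if_neg (show ¬ (j + 1 ≤ j) by omega),
      if_neg (show ¬ (j + 1 + 1 ≤ j) by omega), if_pos (rfl : j + 1 = j + 1),
      if_neg (show ¬ (j = j + 1) by omega), if_neg (show ¬ (j + 1 + 1 = j + 1) by omega),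
      if_neg (lt_irrefl j), if_pos (rfl : j = j), if_neg (show ¬ (j + 1 < j) by omega),
      if_neg (show ¬ (j + 1 = j) by omega)]
    push_cast
    module
  · intro i hi hni
    simp only [Finset.mem_insert, Finset.mem_singleton, not_or] at hni
    obtain ⟨hij, hij1⟩ := hni
    have hT : ∀ w : ℝ,
        (if i + 1 ≤ j then a + ((i + 1 : ℕ) : ℝ) * h else if i + 1 = j + 1 then w
          else a + ((i + 1 - 1 : ℕ) : ℝ) * h) -
        (if i ≤ j then a + ((i : ℕ) : ℝ) * h else if i = j + 1 then w
          else a + ((i - 1 : ℕ) : ℝ) * h) =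
        (if i + 1 ≤ j then a + ((i + 1 : ℕ) : ℝ) * h else a + ((i + 1 - 1 : ℕ) : ℝ) * h) -
        (if i ≤ j then a + ((i : ℕ) : ℝ) * h else a + ((i - 1 : ℕ) : ℝ) * h) := by
      intro w
      have h2 : ¬ (i + 1 = j + 1) := by omega
      have h3 : ¬ (i = j + 1) := hij1
      split_ifs <;> simp_all
    rw [hT v, hT v']
    exact sub_self _

section Metric
variable {X : Type*} [MetricSpace X] [AddCommGroup X] [Module ℝ X]

private lemma dist_eq_sub (hinv : ∀ x y z : X, dist (x + z) (y + z) = dist x y)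
    (x y : X) : dist x y = dist (x - y) 0 := by
  simpa using hinv (x - y) 0 y

private lemma dist_add_le (hinv : ∀ x y z : X, dist (x + z) (y + z) = dist x y)
    (x y : X) : dist (x + y) 0 ≤ dist x 0 + dist y 0 := by
  have h1 : dist (x + y) y = dist x 0 := by simpa using hinv x 0 y
  calc dist (x + y) 0 ≤ dist (x + y) y + dist y 0 := dist_triangle _ _ _
    _ = dist x 0 + dist y 0 := by rw [h1]

private lemma dist_nsmul_le (hinv : ∀ x y z : X, dist (x + z) (y + z) = dist x y)
    (w : X) (s C : ℝ) (hs : dist (s • w) 0 ≤ C) :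
    ∀ k : ℕ, dist (((k : ℝ) * s) • w) 0 ≤ (k : ℝ) * C := by
  intro k
  induction k with
  | zero => simp
  | succ k ih =>
    have e : (((k + 1 : ℕ) : ℝ) * s) • w = ((k : ℝ) * s) • w + s • w := by
      push_cast
      rw [add_mul, one_mul, add_smul]
    rw [e]
    calc dist (((k : ℝ) * s) • w + s • w) 0
        ≤ dist (((k : ℝ) * s) • w) 0 + dist (s • w) 0 := dist_add_le hinv _ _
      _ ≤ (k : ℝ) * C + C := add_le_add ih hs
      _ = ((k + 1 : ℕ) : ℝ) * C := by push_cast; ring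

private lemma key (hinv : ∀ x y z : X, dist (x + z) (y + z) = dist x y)
    (f : ℝ → X) (a b : ℝ) (xbar : X) (δ h : ℝ)
    (H : ∀ P : TaggedPartition a b, P.MeshLT δ → dist (riemannSum f P) xbar < 1)
    (M j : ℕ) (hj : j < M) (hh : 0 < h) (hhδ : h < δ) (hb : a + M * h = b)
    (v v' sL sR : ℝ) (h1 : a + j * h < v') (h2 : v' ≤ v) (h3 : v < a + (j + 1) * h)
    (hsL : sL ∈ Set.Icc (a + j * h) v') (hsR : sR ∈ Set.Icc v (a + (j + 1) * h)) :
    dist ((v - v') • (f sL - f sR)) 0 < 2 := by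
  have hv1 : a + j * h < v := lt_of_lt_of_le h1 h2
  have hv2' : v' < a + (j + 1) * h := lt_of_le_of_lt h2 h3
  have hsLv : sL ∈ Set.Icc (a + j * h) v := ⟨hsL.1, hsL.2.trans h2⟩
  have hsRv' : sR ∈ Set.Icc v' (a + (j + 1) * h) := ⟨h2.trans hsR.1, hsR.2⟩
  set P := splitGrid a b h M j v sL sR hh hj hb hv1 h3 hsLv hsR with hP
  set P' := splitGrid a b h M j v' sL sR hh hj hb h1 hv2' hsL hsRv' with hP'
  have d1 := H P (splitGrid_mesh a b h M j v sL sR hh hj hb hv1 h3 hsLv hsR δ hhδ)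
  have d2 := H P' (splitGrid_mesh a b h M j v' sL sR hh hj hb h1 hv2' hsL hsRv' δ hhδ)
  have dd : dist (riemannSum f P) (riemannSum f P') < 2 := by
    calc dist (riemannSum f P) (riemannSum f P')
        ≤ dist (riemannSum f P) xbar + dist xbar (riemannSum f P') := dist_triangle _ _ _
      _ < 1 + 1 := by rw [dist_comm xbar]; exact add_lt_add d1 d2
      _ = 2 := by norm_num
  have e := splitGrid_sum_sub f a b h M j v v' sL sR hh hj hb hv1 h3 hsLv hsR h1 hv2' hsL hsRv'
  rw [dist_eq_sub hinv] at dd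
  rwa [e] at dd

end Metric

/-- a Riemann integrable function into a vector space with a
complete invariant metric is bounded. -/
theorem riemannIntegrable_bounded
    {X : Type*} [MetricSpace X] [AddCommGroup X] [Module ℝ X] [CompleteSpace X]
    (hinv : ∀ x y z : X, dist (x + z) (y + z) = dist x y)
    (a b : ℝ) (hab : a < b) (f : ℝ → X) (xbar : X)
    (hf : HasRiemannIntegral f a b xbar) :
    ∃ L > 0, ∀ t ∈ Set.Icc a b, dist 0 (f t) ≤ L := by
  obtain ⟨δ, hδ, H⟩ := hf 1 one_pos
  obtain ⟨M, hMgt⟩ := exists_nat_gt ((b - a) / δ)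
  have hbapos : 0 < b - a := by linarith
  have hMR : (0 : ℝ) < M := lt_of_le_of_lt (le_of_lt (div_pos hbapos hδ)) hMgt
  have hM0 : 0 < M := by exact_mod_cast hMR
  set h := (b - a) / M with hh_def
  have hh : 0 < h := div_pos hbapos hMR
  have hb : a + M * h = b := by rw [hh_def, mul_div_assoc', mul_div_cancel_left₀ _ hMR.ne']; ring
  have hhδ : h < δ := by
    rw [hh_def, div_lt_iff₀ hMR]
    have := (div_lt_iff₀ hδ).mp hMgt
    linarith
  set n := ⌈(6 : ℝ) / h⌉₊ + 1 with hn_def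
  have hnR : (0 : ℝ) < n := by positivity
  have hn6 : 6 / h ≤ (n : ℝ) := by
    calc (6 : ℝ) / h ≤ ⌈(6 : ℝ) / h⌉₊ := Nat.le_ceil _
      _ ≤ (n : ℝ) := by exact_mod_cast Nat.le_succ _
  set s₀ := 1 / (n : ℝ) with hs0_def
  have hs0 : 0 < s₀ := by positivity
  have hs06 : s₀ ≤ h / 6 := by
    rw [hs0_def, div_le_div_iff₀ hnR (by norm_num : (0:ℝ) < 6)]
    have h6 : 6 ≤ (n : ℝ) * h := by
      have := (div_le_iff₀ hh).mp hn6
      linarith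
    linarith
  have hns : (n : ℝ) * s₀ = 1 := by
    rw [hs0_def]
    field_simp
  set Sm := ∑ i ∈ Finset.range (M + 1), dist (0 : X) (f (a + i * h)) with hSm
  have hSm0 : 0 ≤ Sm :=
    Finset.sum_nonneg fun _ _ => dist_nonneg
  refine ⟨Sm + (n : ℝ) * 2 + 1, by positivity, ?_⟩
  intro t ht
  set j := min (M - 1) ⌊(t - a) / h⌋₊ with hj_def
  have hjM : j < M := by
    have : j ≤ M - 1 := min_le_left _ _
    omega
  have hta : 0 ≤ (t - a) / h := div_nonneg (by linarith [ht.1]) hh.le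
  have hjle : (j : ℝ) ≤ (t - a) / h := by
    have h1 : (j : ℝ) ≤ (⌊(t - a) / h⌋₊ : ℝ) := by
      exact_mod_cast min_le_right (M - 1) _
    exact h1.trans (Nat.floor_le hta)
  have hptle : a + j * h ≤ t := by
    have := (le_div_iff₀ hh).mp hjle
    linarith
  have htle : t ≤ a + ((j : ℝ) + 1) * h := by
    by_cases hc : ⌊(t - a) / h⌋₊ ≤ M - 1
    · have hje : j = ⌊(t - a) / h⌋₊ := min_eq_right hc
      have h2 : (t - a) / h < (j : ℝ) + 1 := by
        rw [hje]
        push_cast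
        exact Nat.lt_floor_add_one _
      have := (div_lt_iff₀ hh).mp h2
      linarith
    · have hje : j = M - 1 := min_eq_left (le_of_not_ge hc)
      have hjM1 : ((j : ℝ) + 1) = (M : ℝ) := by
        have : j + 1 = M := by omega
        exact_mod_cast this
      rw [hjM1, ← hb] at *
      linarith [ht.2, hb]
  set p := a + (j : ℝ) * h with hp_def
  set q := a + ((j : ℝ) + 1) * h with hq_def
  have hpq : q - p = h := by rw [hp_def, hq_def]; ring
  rcases le_or_gt (h / 2) (t - p) with hcase | hcase
  · -- left anchor at p
    set σ := (t - p) / 3 with hσ_def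
    have htp : 0 < t - p := by linarith
    have hσ0 : 0 < σ := by positivity
    have hσs : s₀ ≤ σ := by
      rw [hσ_def]; linarith
    have hk := key hinv f a b xbar δ h H M j hjM hh hhδ hb
      (p + σ + s₀) (p + σ) p t
      (by rw [← hp_def]; linarith) (by linarith)
      (by rw [← hq_def]; linarith)
      (by rw [← hp_def]; exact ⟨le_refl _, by linarith⟩)
      (by rw [← hq_def]; exact ⟨by linarith, htle⟩)
    have hk' : dist (s₀ • (f p - f t)) 0 ≤ 2 := by
      have e : p + σ + s₀ - (p + σ) = s₀ := by ring
      rw [e] at hk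
      exact hk.le
    have hw := dist_nsmul_le hinv (f p - f t) s₀ 2 hk' n
    rw [hns, one_smul] at hw
    have hdist : dist (f p) (f t) ≤ (n : ℝ) * 2 := by
      rw [dist_eq_sub hinv]; exact hw
    have hsum : dist (0 : X) (f p) ≤ Sm := by
      rw [hSm, hp_def]
      exact Finset.single_le_sum (f := fun i : ℕ => dist (0 : X) (f (a + i * h)))
        (fun _ _ => dist_nonneg) (Finset.mem_range.mpr (by omega))
    calc dist (0 : X) (f t) ≤ dist (0 : X) (f p) + dist (f p) (f t) := dist_triangle _ _ _
      _ ≤ Sm + (n : ℝ) * 2 := add_le_add hsum hdist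
      _ ≤ Sm + (n : ℝ) * 2 + 1 := by linarith
  · -- right anchor at q
    have hqt : h / 2 < q - t := by
      have := hpq
      linarith
    set σ := (q - t) / 3 with hσ_def
    have hσ0 : 0 < σ := by
      have : 0 < q - t := by linarith
      positivity
    have hσs : s₀ ≤ σ := by
      rw [hσ_def]; linarith
    have hk := key hinv f a b xbar δ h H M j hjM hh hhδ hb
      (t + σ + s₀) (t + σ) t q
      (by rw [← hp_def]; linarith) (by linarith)
      (by rw [← hq_def]; linarith)
      (by rw [← hp_def]; exact ⟨hptle, by linarith⟩)
      (by rw [← hq_def]; exact ⟨by linarith, le_refl _⟩)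
    have hk' : dist (s₀ • (f t - f q)) 0 ≤ 2 := by
      have e : t + σ + s₀ - (t + σ) = s₀ := by ring
      rw [e] at hk
      exact hk.le
    have hw := dist_nsmul_le hinv (f t - f q) s₀ 2 hk' n
    rw [hns, one_smul] at hw
    have hdist : dist (f q) (f t) ≤ (n : ℝ) * 2 := by
      rw [dist_comm, dist_eq_sub hinv]; exact hw
    have hsum : dist (0 : X) (f q) ≤ Sm := by
      rw [hSm, hq_def]
      have e : a + ((j : ℝ) + 1) * h = a + ((j + 1 : ℕ) : ℝ) * h := by push_cast; ring
      rw [e]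
      exact Finset.single_le_sum (f := fun i : ℕ => dist (0 : X) (f (a + i * h)))
        (fun _ _ => dist_nonneg) (Finset.mem_range.mpr (by omega))
    calc dist (0 : X) (f t) ≤ dist (0 : X) (f q) + dist (f q) (f t) := dist_triangle _ _ _
      _ ≤ Sm + (n : ℝ) * 2 := add_le_add hsum hdist
      _ ≤ Sm + (n : ℝ) * 2 + 1 := by linarith
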